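/- Correctness of the level-2 recursive Bernstein–Vazirani algorithm: let t : V be the secret string, σ : V → V a family (x₁ ↦ s_{x₁}), and g : V → ZMod 2 a function satisfying g (σ x) = t ⬝ x for all x : V. Let W : Matrix V V ℂ be given by W u x = (-1)^(u ⬝ x) / Real.sqrt (2^n); let D : Matrix (V × V) (V × V) ℂ be the diagonal oracle phase matrix with diagonal entry (-1)^(σ x₁ ⬝ x₂) at (x₁, x₂); and let G : Matrix (V × V) (V × V) ℂ be the diagonal matrix with diagonal entry (-1)^(g x₂) at (x₁, x₂). Let e₀ : V × V → ℂ be the standard basis vector at the all-zeros pair. Then the final state ψ := (W ⊗ 1) * D * (1 ⊗ W) * G * (1 ⊗ W) * D * (W ⊗ W) applied to e₀ (where ⊗ is the Kronecker product of matrices) satisfies ψ (y₁, y₂) = (if y₁ = t then 1 else 0) / Real.sqrt (2^n) for all y₁ y₂ : V; i.e., measuring the first register yields t with probability 1. -/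

import Mathlib

open Matrix Kronecker

noncomputable def walshHadamard (n : ℕ) :
    Matrix (Fin n → ZMod 2) (Fin n → ZMod 2) ℂ :=
  fun u x => (-1 : ℂ) ^ (∑ i, u i * x i : ZMod 2).val / Real.sqrt (2 ^ n)

/-- The diagonal oracle phase matrix `D` with entry `(-1)^(σ x₁ ⬝ x₂)` at `(x₁, x₂)`. -/
noncomputable def oracleD (n : ℕ) (σ : (Fin n → ZMod 2) → (Fin n → ZMod 2)) :
    Matrix ((Fin n → ZMod 2) × (Fin n → ZMod 2))
      ((Fin n → ZMod 2) × (Fin n → ZMod 2)) ℂ :=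
  Matrix.diagonal fun p => (-1 : ℂ) ^ (∑ i, σ p.1 i * p.2 i : ZMod 2).val

/-- The diagonal matrix `G` with entry `(-1)^(g x₂)` at `(x₁, x₂)`. -/
noncomputable def oracleG (n : ℕ) (g : (Fin n → ZMod 2) → ZMod 2) :
    Matrix ((Fin n → ZMod 2) × (Fin n → ZMod 2))
      ((Fin n → ZMod 2) × (Fin n → ZMod 2)) ℂ :=
  Matrix.diagonal fun p => (-1 : ℂ) ^ (g p.2).val


private noncomputable def χ (a : ZMod 2) : ℂ := (-1) ^ a.val

private lemma chi_zero : χ 0 = 1 := rfl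

private lemma chi_add (a b : ZMod 2) : χ (a + b) = χ a * χ b := by
  rcases (by decide : ∀ x : ZMod 2, x = 0 ∨ x = 1) a with rfl | rfl <;>
    rcases (by decide : ∀ x : ZMod 2, x = 0 ∨ x = 1) b with rfl | rfl <;> simp [χ] <;>
    norm_num [show ((2:ZMod 2).val = 0) from rfl, show ((1:ZMod 2).val = 1) from rfl]

private lemma chi_sq (a : ZMod 2) : χ a * χ a = 1 := by
  fin_cases a <;>
    norm_num [χ, show ((0:ZMod 2).val = 0) from rfl, show ((1:ZMod 2).val = 1) from rfl] <;>
    simp [ZMod.val]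

private lemma chi_finsetSum {ι : Type*} (s : Finset ι) (f : ι → ZMod 2) :
    χ (∑ i ∈ s, f i) = ∏ i ∈ s, χ (f i) := by
  induction s using Finset.cons_induction with
  | empty => simp [chi_zero]
  | cons a s ha ih => rw [Finset.sum_cons, Finset.prod_cons, chi_add, ih]

private lemma chi_inner (c : ZMod 2) : ∑ a : ZMod 2, χ (c * a) = if c = 0 then 2 else 0 := by
  rw [show (Finset.univ : Finset (ZMod 2)) = {0, 1} by decide]
  rcases (by decide : ∀ x : ZMod 2, x = 0 ∨ x = 1) c with rfl | rfl <;>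
    simp [χ, Finset.sum_pair, show ((0:ZMod 2).val = 0) from rfl,
      show ((1:ZMod 2).val = 1) from rfl]

private lemma chi_sum {n : ℕ} (s : Fin n → ZMod 2) :
    ∑ x : Fin n → ZMod 2, χ (∑ i, s i * x i) = if s = 0 then (2:ℂ)^n else 0 := by
  classical
  simp_rw [chi_finsetSum]
  rw [← Fintype.piFinset_univ,
    ← Finset.prod_univ_sum (t := fun _ : Fin n => (Finset.univ : Finset (ZMod 2)))
      (f := fun i a => χ (s i * a))]
  simp_rw [chi_inner]
  by_cases hs : s = 0
  · simp [hs]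
  · obtain ⟨j, hj⟩ := Function.ne_iff.mp hs
    rw [if_neg hs, Finset.prod_eq_zero (Finset.mem_univ j)]
    simp [if_neg (by simpa using hj)]

private lemma z2_add_eq_zero : ∀ a b : ZMod 2, (a + b = 0 ↔ a = b) := by decide

private lemma chi_orth {n : ℕ} (y z : Fin n → ZMod 2) :
    ∑ x : Fin n → ZMod 2, χ (∑ i, y i * x i) * χ (∑ i, z i * x i)
      = if y = z then (2:ℂ)^n else 0 := by
  have : ∀ x : Fin n → ZMod 2,
      χ (∑ i, y i * x i) * χ (∑ i, z i * x i) = χ (∑ i, (y + z) i * x i) := by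
    intro x
    rw [← chi_add, ← Finset.sum_add_distrib]
    congr 1
    exact Finset.sum_congr rfl fun i _ => by simp [add_mul]
  simp_rw [this, chi_sum]
  congr 1
  simp only [funext_iff, Pi.add_apply, Pi.zero_apply, eq_iff_iff]
  exact forall_congr' fun i => z2_add_eq_zero _ _

private lemma walsh_eq {n : ℕ} (u x : Fin n → ZMod 2) :
    walshHadamard n u x = χ (∑ i, u i * x i) / (Real.sqrt (2 ^ n) : ℂ) := rfl

private lemma kron_one_left {n : ℕ} (M : Matrix (Fin n → ZMod 2) (Fin n → ZMod 2) ℂ)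
    (v : (Fin n → ZMod 2) × (Fin n → ZMod 2) → ℂ) (x₁ y : Fin n → ZMod 2) :
    (((1 : Matrix (Fin n → ZMod 2) (Fin n → ZMod 2) ℂ) ⊗ₖ M).mulVec v) (x₁, y)
      = ∑ x₂, M y x₂ * v (x₁, x₂) := by
  classical
  simp [Matrix.mulVec, dotProduct, Fintype.sum_prod_type, Matrix.one_apply,
    ite_mul, zero_mul, one_mul, mul_assoc, Finset.sum_ite_irrel,
    Finset.sum_const_zero, Finset.sum_ite_eq]

private lemma kron_one_right {n : ℕ} (M : Matrix (Fin n → ZMod 2) (Fin n → ZMod 2) ℂ)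
    (v : (Fin n → ZMod 2) × (Fin n → ZMod 2) → ℂ) (y₁ y₂ : Fin n → ZMod 2) :
    ((M ⊗ₖ (1 : Matrix (Fin n → ZMod 2) (Fin n → ZMod 2) ℂ)).mulVec v) (y₁, y₂)
      = ∑ x₁, M y₁ x₁ * v (x₁, y₂) := by
  classical
  simp [Matrix.mulVec, dotProduct, Fintype.sum_prod_type, Matrix.one_apply,
    mul_ite, mul_zero, mul_one, ite_mul, zero_mul, Finset.sum_ite_eq,
    Finset.sum_ite_irrel, Finset.sum_const_zero]

theorem recursive_bv_level2_correct (n : ℕ) (t : Fin n → ZMod 2)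
    (σ : (Fin n → ZMod 2) → (Fin n → ZMod 2))
    (g : (Fin n → ZMod 2) → ZMod 2)
    (hg : ∀ x : Fin n → ZMod 2, g (σ x) = ∑ i, t i * x i)
    (e₀ : (Fin n → ZMod 2) × (Fin n → ZMod 2) → ℂ)
    (he₀ : e₀ = fun p => if p = ((0 : Fin n → ZMod 2), (0 : Fin n → ZMod 2)) then 1 else 0)
    (y₁ y₂ : Fin n → ZMod 2) :
    ((walshHadamard n ⊗ₖ (1 : Matrix (Fin n → ZMod 2) (Fin n → ZMod 2) ℂ)) *
        oracleD n σ *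
        ((1 : Matrix (Fin n → ZMod 2) (Fin n → ZMod 2) ℂ) ⊗ₖ walshHadamard n) *
        oracleG n g *
        ((1 : Matrix (Fin n → ZMod 2) (Fin n → ZMod 2) ℂ) ⊗ₖ walshHadamard n) *
        oracleD n σ *
        (walshHadamard n ⊗ₖ walshHadamard n)).mulVec e₀ (y₁, y₂)
      = (if y₁ = t then 1 else 0) / Real.sqrt (2 ^ n) := by
  classical
  set c : ℂ := (Real.sqrt (2 ^ n) : ℂ) with hc_def
  have hsq : Real.sqrt (2 ^ n) * Real.sqrt (2 ^ n) = 2 ^ n :=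
    Real.mul_self_sqrt (by positivity)
  have hc0 : c ≠ 0 := by
    simp only [hc_def, ne_eq, Complex.ofReal_eq_zero]
    exact ne_of_gt (Real.sqrt_pos.2 (by positivity))
  have hcc : c * c = (2:ℂ)^n := by
    rw [hc_def, ← Complex.ofReal_mul, hsq]
    push_cast
    ring
  have hN : ((2:ℂ)^n) ≠ 0 := pow_ne_zero _ two_ne_zero
  rw [← Matrix.mulVec_mulVec, ← Matrix.mulVec_mulVec, ← Matrix.mulVec_mulVec,
    ← Matrix.mulVec_mulVec, ← Matrix.mulVec_mulVec, ← Matrix.mulVec_mulVec]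
  -- step 1
  have h1 : (walshHadamard n ⊗ₖ walshHadamard n).mulVec e₀
      = fun _ => ((2:ℂ)^n)⁻¹ := by
    funext p
    simp only [Matrix.mulVec, dotProduct, he₀, mul_ite, mul_one, mul_zero,
      Finset.sum_ite_eq', Finset.mem_univ, if_true, Matrix.kroneckerMap_apply,
      walsh_eq, ← hc_def]
    simp [chi_zero, ← hcc, div_mul_div_comm, one_div]
  rw [h1]
  -- step 2
  have h2 : (oracleD n σ).mulVec (fun _ => ((2:ℂ)^n)⁻¹)
      = fun p => χ (∑ i, σ p.1 i * p.2 i) * ((2:ℂ)^n)⁻¹ := by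
    funext p
    simp [oracleD, Matrix.mulVec_diagonal, χ]
  rw [h2]
  -- step 3
  have h3 : ((1 : Matrix (Fin n → ZMod 2) (Fin n → ZMod 2) ℂ) ⊗ₖ walshHadamard n).mulVec
        (fun p => χ (∑ i, σ p.1 i * p.2 i) * ((2:ℂ)^n)⁻¹)
      = fun p => if p.2 = σ p.1 then c⁻¹ else 0 := by
    funext p
    obtain ⟨x₁, y⟩ := p
    rw [kron_one_left]
    simp only [walsh_eq, ← hc_def]
    trans (∑ x₂ : Fin n → ZMod 2, χ (∑ i, y i * x₂ i) * χ (∑ i, σ x₁ i * x₂ i)) *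
        (c⁻¹ * ((2:ℂ)^n)⁻¹)
    · rw [Finset.sum_mul]
      exact Finset.sum_congr rfl fun x _ => by ring
    rw [chi_orth, ← hcc]
    by_cases h : y = σ x₁
    · rw [if_pos h, if_pos h]
      field_simp
    · rw [if_neg h, if_neg h, zero_mul]
  rw [h3]
  -- step 4
  have h4 : (oracleG n g).mulVec (fun p => if p.2 = σ p.1 then c⁻¹ else 0)
      = fun p => if p.2 = σ p.1 then χ (∑ i, t i * p.1 i) * c⁻¹ else 0 := by
    funext p
    obtain ⟨x₁, y⟩ := p
    simp only [oracleG, Matrix.mulVec_diagonal]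
    by_cases h : y = σ x₁
    · rw [if_pos h, if_pos h, h, hg]
      rfl
    · simp [h]
  rw [h4]
  -- step 5
  have h5 : ((1 : Matrix (Fin n → ZMod 2) (Fin n → ZMod 2) ℂ) ⊗ₖ walshHadamard n).mulVec
        (fun p => if p.2 = σ p.1 then χ (∑ i, t i * p.1 i) * c⁻¹ else 0)
      = fun p => χ (∑ i, p.2 i * σ p.1 i) * χ (∑ i, t i * p.1 i) * (c⁻¹ * c⁻¹) := by
    funext p
    obtain ⟨x₁, z⟩ := p
    rw [kron_one_left]
    simp only [mul_ite, mul_zero, Finset.sum_ite_eq', Finset.mem_univ, if_true,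
      walsh_eq, ← hc_def]
    field_simp
  rw [h5]
  -- step 6
  have h6 : (oracleD n σ).mulVec
        (fun p => χ (∑ i, p.2 i * σ p.1 i) * χ (∑ i, t i * p.1 i) * (c⁻¹ * c⁻¹))
      = fun p => χ (∑ i, t i * p.1 i) * (c⁻¹ * c⁻¹) := by
    funext p
    obtain ⟨x₁, z⟩ := p
    simp only [oracleD, Matrix.mulVec_diagonal]
    show χ (∑ i, σ x₁ i * z i) *
      (χ (∑ i, z i * σ x₁ i) * χ (∑ i, t i * x₁ i) * (c⁻¹ * c⁻¹)) = _
    have hco : (∑ i, z i * σ x₁ i) = (∑ i, σ x₁ i * z i) :=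
      Finset.sum_congr rfl fun i _ => mul_comm _ _
    rw [hco]
    trans (χ (∑ i, σ x₁ i * z i) * χ (∑ i, σ x₁ i * z i)) *
        (χ (∑ i, t i * x₁ i) * (c⁻¹ * c⁻¹))
    · ring
    rw [chi_sq, one_mul]
  rw [h6]
  -- step 7
  rw [kron_one_right]
  simp only [walsh_eq, ← hc_def]
  trans (∑ x₁ : Fin n → ZMod 2, χ (∑ i, y₁ i * x₁ i) * χ (∑ i, t i * x₁ i)) *
      (c⁻¹ * (c⁻¹ * c⁻¹))
  · rw [Finset.sum_mul]
    exact Finset.sum_congr rfl fun x _ => by ring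
  rw [chi_orth, ← hcc]
  by_cases h : y₁ = t
  · rw [if_pos h, if_pos h]
    field_simp
  · rw [if_neg h, if_neg h, zero_mul, zero_div]
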